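/- For a meshed network with exactly one slack node and no injection nodes, any solution of the heterogeneous gas flow equations has all edge concentrations equal to the slack injection concentration η^s, provided every edge carries nonzero flow and every node is reachable from the slack node along directed flow paths. -/

import Mathlib

private lemma aux_max_principle {V : Type*} [Fintype V] (flow : V → V → ℝ)
    (s : V) (η : V → ℝ)
    (hreach : ∀ v : V, Relation.ReflTransGen (fun u w => 0 < flow u w) s v)
    (hmix : ∀ i, i ≠ s →
      η i * (∑ u, if 0 < flow u i then flow u i else 0) =
        ∑ u, if 0 < flow u i then η u * flow u i else 0) :
    ∀ v, η v ≤ η s := by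
  have key : ∀ v, v ≠ s → (∀ w, η w ≤ η v) → ∀ u, 0 < flow u v → η u = η v := by
    intro v hv hmax u hu
    have h0 : ∑ w, (if 0 < flow w v then (η v - η w) * flow w v else 0) = 0 := by
      have hterm : ∀ w, (if 0 < flow w v then (η v - η w) * flow w v else 0) =
          (if 0 < flow w v then η v * flow w v else 0) -
            (if 0 < flow w v then η w * flow w v else 0) := by
        intro w; by_cases h : 0 < flow w v <;> simp [h, sub_mul]
      rw [Finset.sum_congr rfl (fun w _ => hterm w), Finset.sum_sub_distrib]
      have h1 : ∑ w, (if 0 < flow w v then η v * flow w v else 0) =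
          η v * ∑ w, (if 0 < flow w v then flow w v else 0) := by
        rw [Finset.mul_sum]
        exact Finset.sum_congr rfl (fun w _ => by by_cases h : 0 < flow w v <;> simp [h])
      rw [h1, hmix v hv, sub_self]
    have hnn : ∀ w ∈ Finset.univ,
        0 ≤ (if 0 < flow w v then (η v - η w) * flow w v else 0) := by
      intro w _
      split
      · exact mul_nonneg (sub_nonneg.2 (hmax w)) (le_of_lt (by assumption))
      · exact le_refl 0
    have hz := (Finset.sum_eq_zero_iff_of_nonneg hnn).1 h0 u (Finset.mem_univ u)
    rw [if_pos hu] at hz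
    rcases mul_eq_zero.1 hz with h | h
    · linarith [sub_eq_zero.1 h]
    · exact absurd h hu.ne'
  obtain ⟨v0, -, hv0⟩ := Finset.exists_max_image Finset.univ η ⟨s, Finset.mem_univ s⟩
  have hmax : ∀ w, η w ≤ η v0 := fun w => hv0 w (Finset.mem_univ w)
  suffices h : η s = η v0 by intro v; rw [h]; exact hmax v
  have prop : ∀ v, Relation.ReflTransGen (fun u w => 0 < flow u w) s v →
      (∀ w, η w ≤ η v) → η s = η v := by
    intro v h
    induction h with
    | refl => intro _; rfl
    | @tail b c h1 h2 ih =>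
      intro hm
      by_cases hc : c = s
      · rw [hc]
      · have hb : η b = η c := key c hc hm b h2
        rw [← hb]
        exact ih (fun w => hb ▸ hm w)
  exact prop v0 (hreach v0) hmax

/-- In a meshed network with a single slack node `s` (the only injection) and
all other nodes withdrawing, if every edge carries nonzero flow and every node
is reachable from `s` along directed flow paths, then every edge concentration
(the mixed concentration of its upstream node) equals the slack injection
concentration `ηs`. -/
theorem single_source_uniform_concentration {V : Type*} [Fintype V]
    (G : SimpleGraph V) (flow : V → V → ℝ)
    (hskew : ∀ u v, flow u v = -flow v u)
    (hsupp : ∀ u v, ¬ G.Adj u v → flow u v = 0)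
    (hne : ∀ u v, G.Adj u v → flow u v ≠ 0)
    (s : V) (ηs : ℝ) (η : V → ℝ)
    (hreach : ∀ v : V,
      Relation.ReflTransGen (fun u w => G.Adj u w ∧ 0 < flow u w) s v)
    (hslack : η s = ηs)
    (hmix : ∀ i, i ≠ s →
      η i * (∑ u, if 0 < flow u i then flow u i else 0) =
        ∑ u, if 0 < flow u i then η u * flow u i else 0) :
    (∀ v, η v = ηs) ∧
      ∀ u v, G.Adj u v → (if 0 < flow u v then η u else η v) = ηs := by
  have hreach' : ∀ v : V, Relation.ReflTransGen (fun u w => 0 < flow u w) s v :=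
    fun v => by
      induction hreach v with
      | refl => exact Relation.ReflTransGen.refl
      | tail _ hbc ih => exact Relation.ReflTransGen.tail ih hbc.2
  have hub := aux_max_principle flow s η hreach' hmix
  have hmix' : ∀ i, i ≠ s →
      (fun v => -η v) i * (∑ u, if 0 < flow u i then flow u i else 0) =
        ∑ u, if 0 < flow u i then (fun v => -η v) u * flow u i else 0 := by
    intro i hi
    simp only [neg_mul]
    rw [hmix i hi, ← Finset.sum_neg_distrib]
    exact Finset.sum_congr rfl (fun w _ => by by_cases h : 0 < flow w i <;> simp [h])
  have hlb := aux_max_principle flow s (fun v => -η v) hreach' hmix'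
  have hall : ∀ v, η v = ηs := by
    intro v
    rw [← hslack]
    have := hlb v
    simp only [neg_le_neg_iff] at this
    exact le_antisymm (hub v) this
  refine ⟨hall, fun u v _ => ?_⟩
  split <;> exact hall _
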